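/- arXiv:math/0002201 — 2 statements merged into one kernel-verified Lean document; each statement's English description precedes it below -/
import Mathlib

section
/- Let R be a ring, let m ≥ 1 be an integer, and let C and D be chain complexes of left R-modules indexed by the natural numbers (with differentials lowering degree by one) all of whose terms are projective R-modules. Suppose that the m-th differential d_m : D_m → D_{m-1} of D is the zero map, and that there exists a chain homotopy equivalence between C and D. Then the image of the m-th differential d_m : C_m → C_{m-1} of C is a direct summand of C_{m-1}, i.e. there exists a submodule S of C_{m-1} such that C_{m-1} is the internal direct sum of im(d_m) and S. -/
open CategoryTheory

/-- **Lemma 2.2, (1) ⟹ (2).**  If a chain complex `C` of projective `R`-modules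
(indexed by `ℕ`) is chain homotopy equivalent to a chain complex `D` of projective
`R`-modules whose `m`-th differential vanishes, then the image of the `m`-th
differential of `C` is a direct summand of `C_{m-1}`. -/
theorem image_middle_differential_isCompl_of_homotopyEquiv
    (R : Type) [Ring R] (m : ℕ) (hm : 1 ≤ m)
    (C D : ChainComplex (ModuleCat R) ℕ)
    (hC : ∀ i, Module.Projective R (C.X i))
    (hD : ∀ i, Module.Projective R (D.X i))
    (hDm : D.d m (m - 1) = 0)
    (h : Nonempty (HomotopyEquiv C D)) :
    ∃ S : Submodule R (C.X (m - 1)),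
      IsCompl (LinearMap.range (C.d m (m - 1)).hom) S := by
  obtain ⟨e⟩ := h
  set H := e.homotopyHomInvId with hH
  have hrel : (ComplexShape.down ℕ).Rel m (m - 1) := by
    simpa [ComplexShape.down] using Nat.succ_pred_eq_of_pos hm
  have hcomm := H.comm (m - 1)
  rw [prevD_eq H.hom hrel] at hcomm
  -- key morphism identity : d ≫ s ≫ d = - d
  have key : C.d m (m - 1) ≫ H.hom (m - 1) m ≫ C.d m (m - 1) = - C.d m (m - 1) := by
    have h1 : C.d m (m - 1) ≫ (e.hom ≫ e.inv).f (m - 1) = 0 := by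
      have : C.d m (m - 1) ≫ e.hom.f (m - 1) = e.hom.f m ≫ D.d m (m - 1) :=
        (e.hom.comm m (m - 1)).symm
      rw [HomologicalComplex.comp_f, ← Category.assoc, this, hDm]
      simp
    have h2 : C.d m (m - 1) ≫ dNext (m - 1) H.hom = 0 := by
      rw [dNext_eq_dFrom_fromNext, ← Category.assoc]
      have : C.d m (m - 1) ≫ C.dFrom (m - 1) = 0 := by
        simp [HomologicalComplex.dFrom]
      rw [this]
      simp
    have := congrArg (fun φ => C.d m (m - 1) ≫ φ) hcomm
    simp only [Preadditive.comp_add, h1, h2, HomologicalComplex.id_f,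
      Category.comp_id, zero_add] at this
    linear_combination (norm := abel) -this
  set d : C.X m →ₗ[R] C.X (m - 1) := (C.d m (m - 1)).hom
  set s : C.X (m - 1) →ₗ[R] C.X m := (H.hom (m - 1) m).hom
  have key' : ∀ x : C.X m, d (s (d x)) = - d x := by
    intro x
    have := congrArg (fun φ => φ.hom x) key
    simpa using this
  have hmem : ∀ x : C.X (m - 1), -(d (s x)) ∈ LinearMap.range (C.d m (m - 1)).hom := by
    intro x
    exact ⟨-(s x), by simp [d]⟩
  refine ⟨LinearMap.ker (LinearMap.codRestrict (LinearMap.range (C.d m (m - 1)).hom)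
      (-(d.comp s)) hmem), ?_⟩
  apply LinearMap.isCompl_of_proj
  rintro ⟨x, y, rfl⟩
  apply Subtype.ext
  simp [key' y]
end

section
/- Let R be a ring, let m ≥ 1 be an integer, and let C be a chain complex of projective left R-modules indexed by the natural numbers. Suppose that C is chain homotopy equivalent to a chain complex of projective R-modules whose m-th differential is zero, and that C is also chain homotopy equivalent to a chain complex of projective R-modules whose (m+1)-st differential is zero. Then C is chain homotopy equivalent to a single chain complex F of projective R-modules whose m-th differential d_m : F_m → F_{m-1} and whose (m+1)-st differential d_{m+1} : F_{m+1} → F_m are both zero. -/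
open CategoryTheory CategoryTheory.Limits

namespace TwoTrivialAux

variable {R : Type} [Ring R]

section

variable (D : ChainComplex (ModuleCat R) ℕ) (k : ℕ) (h₀ : D.X (k+1) ⟶ D.X (k+2))

/-- The endomorphisms whose kernels give the new complex. -/
noncomputable def e : ∀ i : ℕ, D.X i ⟶ D.X i := fun i =>
  if hi : i = k + 1 then
    eqToHom (congrArg D.X hi) ≫ (h₀ ≫ D.d (k+2) (k+1)) ≫ eqToHom (congrArg D.X hi.symm)
  else if hi2 : i = k + 2 then
    eqToHom (congrArg D.X hi2) ≫ (D.d (k+2) (k+1) ≫ h₀) ≫ eqToHom (congrArg D.X hi2.symm)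
  else 0

lemma e_one : e D k h₀ (k+1) = h₀ ≫ D.d (k+2) (k+1) := by
  simp [e]

lemma e_two : e D k h₀ (k+2) = D.d (k+2) (k+1) ≫ h₀ := by
  have h : ¬ (k + 2 = k + 1) := by omega
  simp [e, h]

lemma e_other {i : ℕ} (h1 : i ≠ k+1) (h2 : i ≠ k+2) : e D k h₀ i = 0 := by
  simp [e, h1, h2]

variable (key : D.d (k+2) (k+1) ≫ h₀ ≫ D.d (k+2) (k+1) = D.d (k+2) (k+1))

include key in
lemma e_idem (i : ℕ) : e D k h₀ i ≫ e D k h₀ i = e D k h₀ i := by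
  by_cases h1 : i = k + 1
  · subst h1
    rw [e_one]
    simp only [Category.assoc]
    rw [key]
  · by_cases h2 : i = k + 2
    · subst h2
      rw [e_two]
      simp only [Category.assoc]
      rw [reassoc_of% key]
    · rw [e_other _ _ _ h1 h2]
      simp

/-- The modules of the new complex. -/
noncomputable def FX (i : ℕ) : ModuleCat R :=
  ModuleCat.of R (LinearMap.ker (e D k h₀ i).hom)

/-- Inclusion. -/
noncomputable def ι (i : ℕ) : FX D k h₀ i ⟶ D.X i :=
  ModuleCat.ofHom (LinearMap.ker (e D k h₀ i).hom).subtype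

include key in
lemma mem_aux (i : ℕ) (x : D.X i) :
    (𝟙 (D.X i) - e D k h₀ i).hom x ∈ LinearMap.ker (e D k h₀ i).hom := by
  rw [LinearMap.mem_ker]
  have h' : (e D k h₀ i).hom ((e D k h₀ i).hom x) = (e D k h₀ i).hom x :=
    congrArg (fun p : D.X i ⟶ D.X i => p.hom x) (e_idem D k h₀ key i)
  show (e D k h₀ i).hom (ModuleCat.Hom.hom (𝟙 (D.X i)) x - (e D k h₀ i).hom x) = 0
  rw [map_sub]
  show (e D k h₀ i).hom x - (e D k h₀ i).hom ((e D k h₀ i).hom x) = 0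
  rw [h']
  exact sub_self _

/-- Projection. -/
noncomputable def π (i : ℕ) : D.X i ⟶ FX D k h₀ i :=
  ModuleCat.ofHom (LinearMap.codRestrict (LinearMap.ker (e D k h₀ i).hom)
    (𝟙 (D.X i) - e D k h₀ i).hom (mem_aux D k h₀ key i))

lemma ι_π (i : ℕ) : ι D k h₀ i ≫ π D k h₀ key i = 𝟙 (FX D k h₀ i) := by
  apply ModuleCat.hom_ext
  apply LinearMap.ext
  intro x
  apply Subtype.ext
  show ModuleCat.Hom.hom (𝟙 (D.X i)) x.1 - (e D k h₀ i).hom x.1 = x.1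
  rw [LinearMap.mem_ker.mp x.2]
  show x.1 - 0 = x.1
  rw [sub_zero]

lemma π_ι (i : ℕ) : π D k h₀ key i ≫ ι D k h₀ i = 𝟙 (D.X i) - e D k h₀ i := rfl

include key in
lemma d_π : D.d (k+2) (k+1) ≫ π D k h₀ key (k+1) = 0 := by
  apply ModuleCat.hom_ext
  apply LinearMap.ext
  intro x
  apply Subtype.ext
  show ModuleCat.Hom.hom (𝟙 (D.X (k+1))) ((D.d (k+2) (k+1)).hom x) - (e D k h₀ (k+1)).hom ((D.d (k+2) (k+1)).hom x)
      = (0 : D.X (k+1))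
  have hk : (e D k h₀ (k+1)).hom ((D.d (k+2) (k+1)).hom x) = (D.d (k+2) (k+1)).hom x := by
    rw [e_one]
    exact congrArg (fun p : D.X (k+2) ⟶ D.X (k+1) => p.hom x) key
  rw [hk]
  show (D.d (k+2) (k+1)).hom x - (D.d (k+2) (k+1)).hom x = 0
  exact sub_self _

variable (hDm : D.d (k+1) k = 0)

include key hDm in
lemma L2 (n : ℕ) : e D k h₀ (n+1) ≫ D.d (n+1) n ≫ π D k h₀ key n = 0 := by
  by_cases h1 : n = k
  · subst h1
    rw [hDm, zero_comp, comp_zero]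
  · by_cases h2 : n = k + 1
    · subst h2
      rw [e_two]
      simp only [Category.assoc]
      rw [reassoc_of% key, d_π D k h₀ key]
    · rw [e_other _ _ _ (by omega) (by omega), zero_comp]

omit key in
lemma ι_e (i : ℕ) : ι D k h₀ i ≫ e D k h₀ i = 0 := by
  apply ModuleCat.hom_ext
  apply LinearMap.ext
  intro x
  exact LinearMap.mem_ker.mp x.2

omit key in
lemma L3 (n : ℕ) : ι D k h₀ (n+1) ≫ D.d (n+1) n ≫ e D k h₀ n = 0 := by
  by_cases h1 : n = k + 1
  · subst h1
    rw [e_one, ← Category.assoc, ← Category.assoc]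
    have h : (ι D k h₀ (k+2) ≫ D.d (k+2) (k+1)) ≫ h₀ = ι D k h₀ (k+2) ≫ e D k h₀ (k+2) := by
      rw [e_two, ← Category.assoc]
    rw [h, ι_e, zero_comp]
  · by_cases h2 : n = k + 2
    · subst h2
      rw [e_two, ← Category.assoc (D.d (k+3) (k+2)), HomologicalComplex.d_comp_d, zero_comp,
        comp_zero]
    · rw [e_other _ _ _ h1 h2, comp_zero, comp_zero]

include hDm in
lemma mid (n : ℕ) :
    (𝟙 (D.X (n+1)) - e D k h₀ (n+1)) ≫ D.d (n+1) n ≫ π D k h₀ key n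
      = D.d (n+1) n ≫ π D k h₀ key n := by
  rw [Preadditive.sub_comp, Category.id_comp, L2 D k h₀ key hDm n, sub_zero]

/-- The differential of the new complex. -/
noncomputable def Fd (n : ℕ) : FX D k h₀ (n+1) ⟶ FX D k h₀ n :=
  ι D k h₀ (n+1) ≫ D.d (n+1) n ≫ π D k h₀ key n

include hDm in
lemma Fsq (n : ℕ) : Fd D k h₀ key (n+1) ≫ Fd D k h₀ key n = 0 := by
  show (ι D k h₀ (n+2) ≫ D.d (n+2) (n+1) ≫ π D k h₀ key (n+1)) ≫
    (ι D k h₀ (n+1) ≫ D.d (n+1) n ≫ π D k h₀ key n) = 0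
  have assoc1 : (ι D k h₀ (n+2) ≫ D.d (n+2) (n+1) ≫ π D k h₀ key (n+1)) ≫
      (ι D k h₀ (n+1) ≫ D.d (n+1) n ≫ π D k h₀ key n)
      = ι D k h₀ (n+2) ≫ D.d (n+2) (n+1) ≫ (π D k h₀ key (n+1) ≫ ι D k h₀ (n+1)) ≫
        D.d (n+1) n ≫ π D k h₀ key n := by
    simp only [Category.assoc]
  rw [assoc1, π_ι, mid D k h₀ key hDm n, ← Category.assoc (D.d (n+2) (n+1)) (D.d (n+1) n),
    HomologicalComplex.d_comp_d, zero_comp, comp_zero]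

/-- The new complex. -/
noncomputable def F : ChainComplex (ModuleCat R) ℕ :=
  ChainComplex.of (FX D k h₀) (Fd D k h₀ key) (Fsq D k h₀ key hDm)

lemma F_d (n : ℕ) : (F D k h₀ key hDm).d (n+1) n = Fd D k h₀ key n :=
  ChainComplex.of_d (FX D k h₀) (Fd D k h₀ key) n

/-- The projection chain map. -/
noncomputable def Pi : D ⟶ F D k h₀ key hDm where
  f i := π D k h₀ key i
  comm' i j hij := by
    obtain rfl : i = j + 1 := hij.symm
    rw [F_d]
    show π D k h₀ key (j+1) ≫ (ι D k h₀ (j+1) ≫ D.d (j+1) j ≫ π D k h₀ key j) = _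
    rw [← Category.assoc, π_ι, mid D k h₀ key hDm j]
    rfl

/-- The inclusion chain map. -/
noncomputable def Io : F D k h₀ key hDm ⟶ D where
  f i := ι D k h₀ i
  comm' i j hij := by
    obtain rfl : i = j + 1 := hij.symm
    rw [F_d]
    show ι D k h₀ (j+1) ≫ D.d (j+1) j
      = (ι D k h₀ (j+1) ≫ D.d (j+1) j ≫ π D k h₀ key j) ≫ ι D k h₀ j
    simp only [Category.assoc]
    rw [π_ι, Preadditive.comp_sub, Preadditive.comp_sub, Category.comp_id,
      L3 D k h₀ j, sub_zero]

/-- The homotopy component. -/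
noncomputable def S : ∀ i j : ℕ, D.X i ⟶ D.X j := fun i j =>
  if hi : i = k + 1 then
    (if hj : j = k + 2 then
      eqToHom (congrArg D.X hi) ≫ (-h₀) ≫ eqToHom (congrArg D.X hj.symm)
    else 0)
  else 0

lemma S_one : S D k h₀ (k+1) (k+2) = -h₀ := by simp [S]

lemma S_left {i j : ℕ} (h : i ≠ k + 1) : S D k h₀ i j = 0 := by simp [S, h]

lemma S_right {i j : ℕ} (h : j ≠ k + 2) : S D k h₀ i j = 0 := by
  by_cases hi : i = k + 1 <;> simp [S, h, hi]

/-- The homotopy between `Pi ≫ Io` and the identity. -/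
noncomputable def homPiIo : Homotopy (Pi D k h₀ key hDm ≫ Io D k h₀ key hDm) (𝟙 D) where
  hom := S D k h₀
  zero i j hn := by
    rw [ComplexShape.down_Rel] at hn
    by_cases hi : i = k + 1
    · exact S_right D k h₀ (by omega)
    · exact S_left D k h₀ hi
  comm i := by
    have hf : (Pi D k h₀ key hDm ≫ Io D k h₀ key hDm).f i = 𝟙 (D.X i) - e D k h₀ i := by
      rw [HomologicalComplex.comp_f]
      exact π_ι D k h₀ key i
    rw [hf]
    rw [dNext_nat, prevD_eq (S D k h₀) (show (ComplexShape.down ℕ).Rel (i+1) i from rfl)]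
    by_cases h1 : i = k + 1
    · subst h1
      rw [show (k+1:ℕ) - 1 = k from rfl, show (k+1:ℕ) + 1 = k + 2 from rfl]
      rw [S_right D k h₀ (i := k) (by omega), comp_zero, S_one, e_one]
      show 𝟙 (D.X (k+1)) - h₀ ≫ D.d (k+2) (k+1)
        = 0 + (-h₀) ≫ D.d (k+2) (k+1) + 𝟙 (D.X (k+1))
      rw [Preadditive.neg_comp]
      abel
    · by_cases h2 : i = k + 2
      · subst h2
        rw [show (k+2:ℕ) - 1 = k + 1 from rfl, show (k+2:ℕ) + 1 = k + 3 from rfl]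
        rw [S_right D k h₀ (j := k + 3) (by omega), zero_comp, S_one, e_two]
        show 𝟙 (D.X (k+2)) - D.d (k+2) (k+1) ≫ h₀
          = D.d (k+2) (k+1) ≫ (-h₀) + 0 + 𝟙 (D.X (k+2))
        rw [Preadditive.comp_neg]
        abel
      · rw [S_right D k h₀ (by omega), comp_zero, S_left D k h₀ h1, zero_comp,
          e_other _ _ _ h1 h2]
        show 𝟙 (D.X i) - 0 = 0 + 0 + 𝟙 (D.X i)
        abel

/-- `Io ≫ Pi` is the identity on the nose. -/
lemma IoPi : Io D k h₀ key hDm ≫ Pi D k h₀ key hDm = 𝟙 (F D k h₀ key hDm) := by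
  apply HomologicalComplex.hom_ext
  intro i
  rw [HomologicalComplex.comp_f, HomologicalComplex.id_f]
  exact ι_π D k h₀ key i

/-- The homotopy equivalence between `D` and the new complex. -/
noncomputable def equivDF : HomotopyEquiv D (F D k h₀ key hDm) where
  hom := Pi D k h₀ key hDm
  inv := Io D k h₀ key hDm
  homotopyHomInvId := homPiIo D k h₀ key hDm
  homotopyInvHomId := Homotopy.ofEq (IoPi D k h₀ key hDm)

include key hDm in
lemma aux (hD : ∀ i, Module.Projective R (D.X i)) :
    ∃ F : ChainComplex (ModuleCat R) ℕ,
      (∀ i, Module.Projective R (F.X i)) ∧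
      F.d (k+1) k = 0 ∧
      F.d (k+2) (k+1) = 0 ∧
      Nonempty (HomotopyEquiv D F) := by
  refine ⟨F D k h₀ key hDm, ?_, ?_, ?_, ⟨equivDF D k h₀ key hDm⟩⟩
  · intro i
    haveI : Module.Projective R (D.X i) := hD i
    exact Module.Projective.of_split (ι D k h₀ i).hom (π D k h₀ key i).hom
      (by
        apply LinearMap.ext
        intro x
        exact congrArg (fun p : FX D k h₀ i ⟶ FX D k h₀ i => p.hom x) (ι_π D k h₀ key i))
  · rw [F_d]
    show ι D k h₀ (k+1) ≫ D.d (k+1) k ≫ π D k h₀ key k = 0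
    rw [hDm, zero_comp, comp_zero]
  · rw [F_d]
    show ι D k h₀ (k+2) ≫ D.d (k+2) (k+1) ≫ π D k h₀ key (k+1) = 0
    rw [d_π D k h₀ key, comp_zero]

end

end TwoTrivialAux

/-- If a chain complex `C` of projective `R`-modules (indexed by `ℕ`) is chain homotopy
equivalent to a complex of projective modules with vanishing `m`-th differential, and also
chain homotopy equivalent to a complex of projective modules with vanishing `(m+1)`-st
differential, then `C` is chain homotopy equivalent to a single complex `F` of projective
modules whose `m`-th and `(m+1)`-st differentials both vanish. -/
theorem homotopyEquiv_complex_with_two_trivial_middle_differentials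
    (R : Type) [Ring R] (m : ℕ) (hm : 1 ≤ m)
    (C D E : ChainComplex (ModuleCat R) ℕ)
    (hC : ∀ i, Module.Projective R (C.X i))
    (hD : ∀ i, Module.Projective R (D.X i))
    (hE : ∀ i, Module.Projective R (E.X i))
    (hDm : D.d m (m - 1) = 0)
    (hEm : E.d (m + 1) m = 0)
    (hCD : Nonempty (HomotopyEquiv C D))
    (hCE : Nonempty (HomotopyEquiv C E)) :
    ∃ F : ChainComplex (ModuleCat R) ℕ,
      (∀ i, Module.Projective R (F.X i)) ∧
      F.d m (m - 1) = 0 ∧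
      F.d (m + 1) m = 0 ∧
      Nonempty (HomotopyEquiv C F) := by
  obtain ⟨k, rfl⟩ : ∃ k, m = k + 1 := ⟨m - 1, (Nat.succ_pred_eq_of_pos hm).symm⟩
  have hDm' : D.d (k+1) k = 0 := hDm
  have hEm' : E.d (k+2) (k+1) = 0 := hEm
  obtain ⟨w⟩ := hCD
  obtain ⟨w'⟩ := hCE
  set v : HomotopyEquiv D E := w.symm.trans w' with hv
  have hs := v.homotopyHomInvId
  have comm := hs.comm (k+1)
  rw [dNext_nat, prevD_eq hs.hom (show (ComplexShape.down ℕ).Rel (k+2) (k+1) from rfl)] at comm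
  rw [show (k+1 : ℕ) - 1 = k from rfl, hDm', zero_comp, zero_add] at comm
  have key0 : D.d (k+2) (k+1) ≫ (v.hom ≫ v.inv).f (k+1)
      = D.d (k+2) (k+1) ≫ hs.hom (k+1) (k+2) ≫ D.d (k+2) (k+1) + D.d (k+2) (k+1) := by
    rw [comm, Preadditive.comp_add, HomologicalComplex.id_f, Category.comp_id]
  have key1 : D.d (k+2) (k+1) ≫ (v.hom ≫ v.inv).f (k+1) = 0 := by
    rw [HomologicalComplex.comp_f, ← Category.assoc, ← HomologicalComplex.Hom.comm, hEm',
      comp_zero, zero_comp]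
  rw [key1] at key0
  have key2 : D.d (k+2) (k+1) ≫ hs.hom (k+1) (k+2) ≫ D.d (k+2) (k+1) = - D.d (k+2) (k+1) :=
    eq_neg_of_add_eq_zero_left key0.symm
  have key : D.d (k+2) (k+1) ≫ (-hs.hom (k+1) (k+2)) ≫ D.d (k+2) (k+1) = D.d (k+2) (k+1) := by
    rw [Preadditive.neg_comp, Preadditive.comp_neg, key2, neg_neg]
  obtain ⟨F, hF1, hF2, hF3, ⟨eDF⟩⟩ := TwoTrivialAux.aux D k (-hs.hom (k+1) (k+2)) key hDm' hD
  exact ⟨F, hF1, hF2, hF3, ⟨w.trans eDF⟩⟩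
end
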